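/- Let 0 → M → N → P → 0 be a short exact sequence of persistence modules over a field k (meaning the maps are natural transformations and for every s ∈ ℝ the sequence 0 → M(s) → N(s) → P(s) → 0 of k-vector spaces is exact). Suppose M ≅ ⊕_{i=1}^{m} k[a_i, b_i), N ≅ ⊕_{j=1}^{n} k[c_j, d_j) and P ≅ ⊕_{l=1}^{p} k[e_l, f_l) are finite direct sums of interval modules (left endpoints in ℝ, right endpoints in (left endpoint, ∞]). Then Σ_{j=1}^{n} (e^{−c_j} − e^{−d_j}) = Σ_{i=1}^{m} (e^{−a_i} − e^{−b_i}) + Σ_{l=1}^{p} (e^{−e_l} − e^{−f_l}), with the convention e^{−∞} = 0; that is, persistent magnitude is additive with respect to short exact sequences: |N| = |M| + |P|. -/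

import Mathlib

open scoped BigOperators Classical

/-- A persistence module over the field `k`: a functor from `(ℝ, ≤)` to
`k`-vector spaces. -/
structure PersMod (k : Type) [Field k] : Type 1 where
  V : ℝ → Type
  [acg : ∀ s, AddCommGroup (V s)]
  [mod : ∀ s, Module k (V s)]
  map : ∀ {s s' : ℝ}, s ≤ s' → (V s →ₗ[k] V s')
  map_refl : ∀ (s : ℝ) (x : V s), map (le_refl s) x = x
  map_trans : ∀ {s s' s'' : ℝ} (h : s ≤ s') (h' : s' ≤ s'') (x : V s),
    map h' (map h x) = map (h.trans h') x

attribute [instance] PersMod.acg PersMod.mod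

/-- Isomorphism of persistence modules: a family of linear equivalences
commuting with the structure maps. -/
def PersIso {k : Type} [Field k] (M N : PersMod k) : Prop :=
  ∃ e : ∀ s : ℝ, M.V s ≃ₗ[k] N.V s,
    ∀ (s s' : ℝ) (h : s ≤ s') (x : M.V s), e s' (M.map h x) = N.map h (e s x)

/-- The value of the interval module `k[a,b)` at `s`, as a submodule of `k`:
all of `k` if `a ≤ s < b`, and `0` otherwise. -/
noncomputable def intervalSub (k : Type) [Field k] (a : ℝ) (b : WithTop ℝ) (s : ℝ) :
    Submodule k k :=
  if a ≤ s ∧ (s : WithTop ℝ) < b then ⊤ else ⊥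

/-- The structure map of the interval module `k[a,b)`. -/
noncomputable def intervalMap (k : Type) [Field k] (a : ℝ) (b : WithTop ℝ)
    {s s' : ℝ} (_h : s ≤ s') :
    intervalSub k a b s →ₗ[k] intervalSub k a b s' where
  toFun x := ⟨if a ≤ s' ∧ (s' : WithTop ℝ) < b then (x : k) else 0, by
    unfold intervalSub; split_ifs with h' <;>
      first | exact Submodule.mem_top | exact (Submodule.mem_bot k).2 rfl⟩
  map_add' x y := by
    apply Subtype.ext
    simp only [Submodule.coe_add]
    split_ifs <;> simp
  map_smul' c x := by
    apply Subtype.ext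
    simp only [Submodule.coe_smul, RingHom.id_apply]
    split_ifs <;> simp [mul_comm]

lemma intervalSub_eq_zero {k : Type} [Field k] {a : ℝ} {b : WithTop ℝ} {s : ℝ}
    (h : ¬(a ≤ s ∧ (s : WithTop ℝ) < b)) (x : intervalSub k a b s) : (x : k) = 0 := by
  have e : intervalSub k a b s = ⊥ := by unfold intervalSub; exact if_neg h
  have hx : (x : k) ∈ (⊥ : Submodule k k) := e ▸ x.2
  exact (Submodule.mem_bot k).1 hx

/-- The finitely presented persistence module `⊕_i k[a i, b i)` with the given
barcode. -/
noncomputable def barcodeMod (k : Type) [Field k] {m : ℕ}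
    (a : Fin m → ℝ) (b : Fin m → WithTop ℝ) : PersMod k where
  V s := ∀ i : Fin m, intervalSub k (a i) (b i) s
  map h := LinearMap.pi fun i => (intervalMap k (a i) (b i) h).comp (LinearMap.proj i)
  map_refl s x := by
    funext i
    apply Subtype.ext
    simp only [LinearMap.pi_apply, LinearMap.comp_apply, LinearMap.proj_apply, intervalMap,
      LinearMap.coe_mk, AddHom.coe_mk]
    split_ifs with h
    · rfl
    · exact (intervalSub_eq_zero h (x i)).symm
  map_trans {s s' s''} h h' x := by
    funext i
    apply Subtype.ext
    simp only [LinearMap.pi_apply, LinearMap.comp_apply, LinearMap.proj_apply, intervalMap,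
      LinearMap.coe_mk, AddHom.coe_mk]
    split_ifs with h1 h2
    · rfl
    · -- s'' in interval, s' not in interval; then s not in interval either
      have hs : ¬(a i ≤ s ∧ (s : WithTop ℝ) < b i) := by
        intro hs
        exact h2 ⟨hs.1.trans h,
          lt_of_le_of_lt (show (s' : WithTop ℝ) ≤ (s'' : WithTop ℝ) by exact_mod_cast h') h1.2⟩
      exact (intervalSub_eq_zero hs (x i)).symm
    · rfl

/-- `e^{−b}` for an extended right endpoint `b ∈ ℝ ∪ {∞}`, with the convention
`e^{−∞} = 0`. -/
noncomputable def expE (b : WithTop ℝ) : ℝ :=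
  if h : b = ⊤ then 0 else Real.exp (-(b.untop h))


open MeasureTheory Real Set

noncomputable def ivSet (a : ℝ) (b : WithTop ℝ) : Set ℝ := {s | a ≤ s ∧ (s : WithTop ℝ) < b}

lemma ivSet_top (a : ℝ) : ivSet a ⊤ = Set.Ici a := by
  ext s; simp [ivSet, WithTop.coe_lt_top]

lemma ivSet_coe (a c : ℝ) : ivSet a (c : WithTop ℝ) = Set.Ico a c := by
  ext s; simp [ivSet, Set.mem_Ico, WithTop.coe_lt_coe]

lemma ivSet_measurable (a : ℝ) (b : WithTop ℝ) : MeasurableSet (ivSet a b) := by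
  cases b with
  | top => rw [ivSet_top]; exact measurableSet_Ici
  | coe c => rw [ivSet_coe]; exact measurableSet_Ico

lemma expneg_integrableOn_Ici (a : ℝ) :
    IntegrableOn (fun s => Real.exp (-s)) (Set.Ici a) := by
  rw [integrableOn_Ici_iff_integrableOn_Ioi]
  have := exp_neg_integrableOn_Ioi a (b := 1) one_pos
  simpa using this

lemma ivInd_integrable (a : ℝ) (b : WithTop ℝ) :
    Integrable ((ivSet a b).indicator fun s => Real.exp (-s)) := by
  rw [integrable_indicator_iff (ivSet_measurable a b)]
  refine (expneg_integrableOn_Ici a).mono_set ?_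
  intro s hs; exact hs.1

lemma ivInd_integral (a : ℝ) (b : WithTop ℝ) (hab : (a : WithTop ℝ) < b) :
    ∫ s, (ivSet a b).indicator (fun s => Real.exp (-s)) s = Real.exp (-a) - expE b := by
  rw [MeasureTheory.integral_indicator (ivSet_measurable a b)]
  cases b with
  | top =>
    rw [ivSet_top, expE, dif_pos rfl, MeasureTheory.integral_Ici_eq_integral_Ioi,
      integral_exp_neg_Ioi, sub_zero]
  | coe c =>
    have hac : a ≤ c := le_of_lt (by exact_mod_cast hab)
    rw [ivSet_coe, integral_Ico_eq_integral_Ioo, ← integral_Ioc_eq_integral_Ioo,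
      ← intervalIntegral.integral_of_le hac]
    have : ∫ x in a..c, Real.exp (-x) = ∫ x in (-c)..(-a), Real.exp x :=
      intervalIntegral.integral_comp_neg fun x => Real.exp x
    rw [this, integral_exp, expE, dif_neg (by simp)]
    simp

noncomputable def cnt {m : ℕ} (a : Fin m → ℝ) (b : Fin m → WithTop ℝ) (s : ℝ) : ℕ :=
  (Finset.univ.filter fun i => a i ≤ s ∧ (s : WithTop ℝ) < b i).card

lemma sum_ivInd {m : ℕ} (a : Fin m → ℝ) (b : Fin m → WithTop ℝ) (s : ℝ) :
    ∑ i : Fin m, (ivSet (a i) (b i)).indicator (fun s => Real.exp (-s)) s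
      = (cnt a b s : ℝ) * Real.exp (-s) := by
  rw [cnt, Finset.card_filter]
  push_cast
  rw [Finset.sum_mul]
  refine Finset.sum_congr rfl fun i _ => ?_
  by_cases h : a i ≤ s ∧ (s : WithTop ℝ) < b i
  · rw [Set.indicator_of_mem (show s ∈ ivSet (a i) (b i) from h), if_pos h, one_mul]
  · rw [Set.indicator_of_notMem (show s ∉ ivSet (a i) (b i) from h), if_neg h, zero_mul]

lemma mag_eq_integral {m : ℕ} (a : Fin m → ℝ) (b : Fin m → WithTop ℝ)
    (hab : ∀ i, (a i : WithTop ℝ) < b i) :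
    ∑ i : Fin m, (Real.exp (-(a i)) - expE (b i))
      = ∫ s, ∑ i : Fin m, (ivSet (a i) (b i)).indicator (fun s => Real.exp (-s)) s := by
  rw [MeasureTheory.integral_finset_sum _ fun i _ => ivInd_integrable (a i) (b i)]
  exact (Finset.sum_congr rfl fun i _ => (ivInd_integral (a i) (b i) (hab i)).symm)

lemma finrank_intervalSub (k : Type) [Field k] (a : ℝ) (b : WithTop ℝ) (s : ℝ) :
    Module.finrank k (intervalSub k a b s) = if a ≤ s ∧ (s : WithTop ℝ) < b then 1 else 0 := by
  by_cases h : a ≤ s ∧ (s : WithTop ℝ) < b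
  · rw [if_pos h, intervalSub, if_pos h, finrank_top, Module.finrank_self]
  · rw [if_neg h, intervalSub, if_neg h]; exact finrank_bot k k

lemma finrank_barcode (k : Type) [Field k] {m : ℕ} (a : Fin m → ℝ) (b : Fin m → WithTop ℝ)
    (s : ℝ) : Module.finrank k ((barcodeMod k a b).V s) = cnt a b s := by
  show Module.finrank k (∀ i, intervalSub k (a i) (b i) s) = _
  rw [Module.finrank_pi_fintype, cnt, Finset.card_filter]
  exact Finset.sum_congr rfl fun i _ => finrank_intervalSub k (a i) (b i) s

/-- persistent magnitude is additive with respect to short exact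
sequences of (finitely presented) persistence modules: if `0 → M → N → P → 0` is
exact and `M ≅ ⊕ k[aM i, bM i)`, `N ≅ ⊕ k[aN j, bN j)`, `P ≅ ⊕ k[aP l, bP l)`,
then `|N| = |M| + |P|`. -/
theorem persistentMagnitude_additive
    (k : Type) [Field k] (M N P : PersMod k)
    (f : ∀ s : ℝ, M.V s →ₗ[k] N.V s) (g : ∀ s : ℝ, N.V s →ₗ[k] P.V s)
    (hf_nat : ∀ (s s' : ℝ) (h : s ≤ s') (x : M.V s), f s' (M.map h x) = N.map h (f s x))
    (hg_nat : ∀ (s s' : ℝ) (h : s ≤ s') (x : N.V s), g s' (N.map h x) = P.map h (g s x))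
    (hinj : ∀ s : ℝ, Function.Injective (f s))
    (hexact : ∀ s : ℝ, LinearMap.range (f s) = LinearMap.ker (g s))
    (hsurj : ∀ s : ℝ, Function.Surjective (g s))
    {m n p : ℕ}
    (aM : Fin m → ℝ) (bM : Fin m → WithTop ℝ) (habM : ∀ i, (aM i : WithTop ℝ) < bM i)
    (aN : Fin n → ℝ) (bN : Fin n → WithTop ℝ) (habN : ∀ j, (aN j : WithTop ℝ) < bN j)
    (aP : Fin p → ℝ) (bP : Fin p → WithTop ℝ) (habP : ∀ l, (aP l : WithTop ℝ) < bP l)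
    (hisoM : PersIso M (barcodeMod k aM bM))
    (hisoN : PersIso N (barcodeMod k aN bN))
    (hisoP : PersIso P (barcodeMod k aP bP)) :
    ∑ j : Fin n, (Real.exp (-(aN j)) - expE (bN j)) =
      (∑ i : Fin m, (Real.exp (-(aM i)) - expE (bM i))) +
      ∑ l : Fin p, (Real.exp (-(aP l)) - expE (bP l)) := by
  obtain ⟨eM, -⟩ := hisoM
  obtain ⟨eN, -⟩ := hisoN
  obtain ⟨eP, -⟩ := hisoP
  have hcnt : ∀ s : ℝ, cnt aN bN s = cnt aM bM s + cnt aP bP s := by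
    intro s
    haveI : FiniteDimensional k ((barcodeMod k aM bM).V s) :=
      inferInstanceAs (FiniteDimensional k (∀ i, intervalSub k (aM i) (bM i) s))
    haveI : FiniteDimensional k ((barcodeMod k aN bN).V s) :=
      inferInstanceAs (FiniteDimensional k (∀ i, intervalSub k (aN i) (bN i) s))
    haveI : FiniteDimensional k ((barcodeMod k aP bP).V s) :=
      inferInstanceAs (FiniteDimensional k (∀ i, intervalSub k (aP i) (bP i) s))
    haveI : FiniteDimensional k (M.V s) := LinearEquiv.finiteDimensional (eM s).symm
    haveI : FiniteDimensional k (N.V s) := LinearEquiv.finiteDimensional (eN s).symm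
    haveI : FiniteDimensional k (P.V s) := LinearEquiv.finiteDimensional (eP s).symm
    have hM : Module.finrank k (M.V s) = cnt aM bM s := by
      rw [(eM s).finrank_eq, finrank_barcode]
    have hN : Module.finrank k (N.V s) = cnt aN bN s := by
      rw [(eN s).finrank_eq, finrank_barcode]
    have hP : Module.finrank k (P.V s) = cnt aP bP s := by
      rw [(eP s).finrank_eq, finrank_barcode]
    have hrn := LinearMap.finrank_range_add_finrank_ker (g s)
    have hr : Module.finrank k (LinearMap.range (g s)) = Module.finrank k (P.V s) := by
      rw [LinearMap.range_eq_top.mpr (hsurj s)]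
      exact finrank_top k _
    have hk : Module.finrank k (LinearMap.ker (g s)) = Module.finrank k (M.V s) := by
      rw [← hexact s]
      exact ((LinearEquiv.ofInjective (f s) (hinj s)).finrank_eq).symm
    omega
  rw [mag_eq_integral aN bN habN, mag_eq_integral aM bM habM, mag_eq_integral aP bP habP,
    ← MeasureTheory.integral_add
      (MeasureTheory.integrable_finset_sum _ fun i _ => ivInd_integrable (aM i) (bM i))
      (MeasureTheory.integrable_finset_sum _ fun l _ => ivInd_integrable (aP l) (bP l))]
  refine MeasureTheory.integral_congr_ae (Filter.Eventually.of_forall fun s => ?_)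
  simp only []
  rw [sum_ivInd, sum_ivInd, sum_ivInd, hcnt s]
  push_cast
  ring
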